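/- For the 4-term exact sequence of Z[S₄]-modules 0 → Z → Z[X₄] ⊕ Z → Z[X₆] ⊕ Z → Z[X₃] → 0 of the previous statement, there exists a degree -1 map h of the underlying complex (i.e., maps h₀: Z[X₄]⊕Z → Z, h₁: Z[X₆]⊕Z → Z[X₄]⊕Z, h₂: Z[X₃] → Z[X₆]⊕Z) satisfying dh + hd = 2·id in every degree. -/
import Mathlib


open Finset

/-- `X₆`: the two-element subsets of `X₄ = Fin 4`. -/
abbrev X6 : Type := {s : Finset (Fin 4) // s.card = 2}

/-- Complementation involution on `X₆`. -/
def complX6 (s : X6) : X6 :=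
  ⟨s.1ᶜ, by simp [Finset.card_compl, s.2]⟩

/-- The equivalence relation on `X₆` identifying a subset with its complement. -/
instance X6setoid : Setoid X6 where
  r s t := t = s ∨ t = complX6 s
  iseqv := by
    constructor
    · exact fun s => Or.inl rfl
    · rintro s t (rfl | rfl)
      · exact Or.inl rfl
      · exact Or.inr (Subtype.ext (by simp [complX6]))
    · rintro s t u (rfl | rfl) (h | h)
      · exact Or.inl h
      · exact Or.inr h
      · subst h; exact Or.inr rfl
      · subst h; exact Or.inl (Subtype.ext (by simp [complX6]))

instance : DecidableRel (X6setoid).r := fun s t =>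
  inferInstanceAs (Decidable (t = s ∨ t = complX6 s))

/-- `X₃ = X₆ / ∗`, the quotient of `X₆` by complementation. -/
abbrev X3 : Type := Quotient X6setoid

instance : DecidableEq X3 := fun a b =>
  Quotient.decidableEq (d := fun s t =>
    inferInstanceAs (Decidable (t = s ∨ t = complX6 s))) a b

/- ### Auxiliary material for the proof -/

instance : DecidableRel (fun s t : X6 => s ≈ t) := fun s t =>
  inferInstanceAs (Decidable (t = s ∨ t = complX6 s))

instance : Fintype X3 := Quotient.fintype X6setoid

lemma cnt1 (i j : Fin 4) :
    ((univ.filter fun s : X6 => i ∈ s.1 ∧ j ∈ s.1).card : ℤ) = if i = j then 3 else 1 := by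
  revert i j; decide

lemma cnt2 (s u : X6) :
    ((s.1 ∩ u.1).card : ℤ) = 1 + (if u = s then 1 else 0) - (if u = complX6 s then 1 else 0) := by
  revert s u; decide

lemma cnt0 (i : Fin 4) : ((univ.filter fun s : X6 => i ∈ s.1).card : ℤ) = 3 := by
  revert i; decide

lemma cardX3 : ((Finset.univ : Finset X3).card : ℤ) = 3 := by decide

lemma compl_invol (s : X6) : complX6 (complX6 s) = s := by revert s; decide

lemma compl_ne (s : X6) : s ≠ complX6 s := by revert s; decide

lemma quot_eq (u s : X6) : ((⟦u⟧ : X3) = ⟦s⟧) ↔ (u = s ∨ u = complX6 s) := by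
  rw [Quotient.eq]
  show (s = u ∨ s = complX6 u) ↔ _
  constructor
  · rintro (rfl | h)
    · exact Or.inl rfl
    · exact Or.inr (by rw [h, compl_invol])
  · rintro (rfl | rfl)
    · exact Or.inl rfl
    · exact Or.inr (compl_invol s).symm

lemma key0 (i : Fin 4) (m : ℤ) : (∑ s : X6, if i ∈ s.1 then m else 0) = 3 * m := by
  rw [← Finset.sum_filter, Finset.sum_const, nsmul_eq_mul]
  rw [show ((univ.filter fun s : X6 => i ∈ s.1).card : ℤ) = 3 from cnt0 i]

lemma key1 (i : Fin 4) (x : Fin 4 → ℤ) :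
    (∑ s : X6, if i ∈ s.1 then (∑ j ∈ s.1, x j) else 0) = 2 * x i + ∑ j, x j := by
  have step : ∀ s : X6, (if i ∈ s.1 then (∑ j ∈ s.1, x j) else 0)
      = ∑ j : Fin 4, if i ∈ s.1 ∧ j ∈ s.1 then x j else 0 := by
    intro s
    split_ifs with h
    · rw [← Finset.sum_filter]
      apply Finset.sum_congr _ (fun _ _ => rfl)
      ext j; simp [h]
    · simp [h]
  rw [Finset.sum_congr rfl fun s _ => step s, Finset.sum_comm]
  have h1 : ∀ j : Fin 4, (∑ s : X6, if i ∈ s.1 ∧ j ∈ s.1 then x j else 0)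
      = (if i = j then 3 else 1) * x j := by
    intro j
    rw [← Finset.sum_filter, Finset.sum_const, ← cnt1 i j]
    simp [mul_comm]
  rw [Finset.sum_congr rfl fun j _ => h1 j]
  have h2 : ∀ j : Fin 4, (if i = j then 3 else 1) * x j
      = x j + (if j = i then 2 * x j else 0) := by
    intro j; rcases eq_or_ne i j with rfl | h
    · simp; ring
    · simp [h, Ne.symm h]
  rw [Finset.sum_congr rfl fun j _ => h2 j, Finset.sum_add_distrib,
    Finset.sum_ite_eq' univ i (fun j => 2 * x j)]
  simp [add_comm]

lemma key2 (s : X6) (y : X6 → ℤ) :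
    ∑ i ∈ s.1, (∑ u : X6, if i ∈ u.1 then y u else 0)
      = (∑ u : X6, y u) + y s - y (complX6 s) := by
  rw [Finset.sum_comm]
  have h1 : ∀ u : X6, (∑ i ∈ s.1, if i ∈ u.1 then y u else 0)
      = (1 + (if u = s then 1 else 0) - (if u = complX6 s then 1 else 0)) * y u := by
    intro u
    rw [← Finset.sum_filter, Finset.sum_const, Finset.filter_mem_eq_inter, nsmul_eq_mul, ← cnt2]
  rw [Finset.sum_congr rfl fun u _ => h1 u]
  have h2 : ∀ u : X6, (1 + (if u = s then 1 else 0) - (if u = complX6 s then 1 else 0)) * y u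
      = y u + (if u = s then y u else 0) - (if u = complX6 s then y u else 0) := by
    intro u; split_ifs <;> ring
  rw [Finset.sum_congr rfl fun u _ => h2 u]
  rw [Finset.sum_sub_distrib, Finset.sum_add_distrib,
    Finset.sum_ite_eq' univ s y, Finset.sum_ite_eq' univ (complX6 s) y]
  simp

lemma key3 (s : X6) (y : X6 → ℤ) :
    ∑ u : X6, (if (⟦u⟧ : X3) = ⟦s⟧ then y u else 0) = y s + y (complX6 s) := by
  have step : ∀ u : X6, (if (⟦u⟧ : X3) = ⟦s⟧ then y u else 0)
      = (if u = s then y u else 0) + (if u = complX6 s then y u else 0) := by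
    intro u
    rcases eq_or_ne u s with rfl | h1
    · rw [if_pos ((quot_eq u u).mpr (Or.inl rfl)), if_pos rfl, if_neg (compl_ne u), add_zero]
    · rcases eq_or_ne u (complX6 s) with rfl | h2
      · rw [if_pos ((quot_eq _ _).mpr (Or.inr rfl)), if_neg h1, if_pos rfl, zero_add]
      · rw [if_neg (by rw [quot_eq]; tauto), if_neg h1, if_neg h2, add_zero]
  rw [Finset.sum_congr rfl fun u _ => step u, Finset.sum_add_distrib,
    Finset.sum_ite_eq' univ s y, Finset.sum_ite_eq' univ (complX6 s) y]
  simp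

lemma key4 (y : X6 → ℤ) :
    ∑ t : X3, ∑ u : X6, (if (⟦u⟧ : X3) = t then y u else 0) = ∑ u : X6, y u := by
  rw [Finset.sum_comm]
  exact Finset.sum_congr rfl fun u _ => by
    rw [Finset.sum_ite_eq univ (⟦u⟧ : X3) (fun _ => y u)]; simp

lemma key5 (y : X6 → ℤ) :
    ∑ i : Fin 4, (∑ u : X6, if i ∈ u.1 then y u else 0) = 2 * ∑ u : X6, y u := by
  rw [Finset.sum_comm]
  have h1 : ∀ u : X6, (∑ i : Fin 4, if i ∈ u.1 then y u else 0) = 2 * y u := by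
    intro u
    rw [← Finset.sum_filter, Finset.sum_const]
    have h : (univ.filter (fun i : Fin 4 => i ∈ u.1)) = u.1 := by ext i; simp
    rw [h]
    simp [u.2, two_mul]
  rw [Finset.sum_congr rfl fun u _ => h1 u, ← Finset.mul_sum]

/-- For the exact quadruple `0 → ℤ → ℤ[X₄]⊕ℤ → ℤ[X₆]⊕ℤ → ℤ[X₃] → 0` of
permutation `ℤ[S₄]`-modules there is a degree `-1` homotopy `h` (additive maps
`h₀, h₁, h₂`) with `dh + hd = 2·id` in every degree. -/
theorem stmt_7
    (d₀ : ℤ → (Fin 4 → ℤ) × ℤ)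
    (hd₀ : ∀ n : ℤ, d₀ n = (fun _ => n, -2 * n))
    (d₁ : (Fin 4 → ℤ) × ℤ → (X6 → ℤ) × ℤ)
    (hd₁ : ∀ x : (Fin 4 → ℤ) × ℤ, d₁ x =
      (fun s => (∑ i ∈ s.1, x.1 i) + x.2, (∑ i, x.1 i) + 2 * x.2))
    (d₂ : (X6 → ℤ) × ℤ → (X3 → ℤ))
    (hd₂ : ∀ y : (X6 → ℤ) × ℤ, d₂ y =
      fun t => (∑ s : X6, if (⟦s⟧ : X3) = t then y.1 s else 0) - y.2) :
    ∃ (h₀ : (Fin 4 → ℤ) × ℤ →+ ℤ)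
      (h₁ : (X6 → ℤ) × ℤ →+ (Fin 4 → ℤ) × ℤ)
      (h₂ : (X3 → ℤ) →+ (X6 → ℤ) × ℤ),
      (∀ n : ℤ, h₀ (d₀ n) = 2 * n) ∧
      (∀ x : (Fin 4 → ℤ) × ℤ, d₀ (h₀ x) + h₁ (d₁ x) = (2 : ℤ) • x) ∧
      (∀ y : (X6 → ℤ) × ℤ, d₁ (h₁ y) + h₂ (d₂ y) = (2 : ℤ) • y) ∧
      (∀ w : X3 → ℤ, d₂ (h₂ w) = (2 : ℤ) • w) := by
  refine ⟨AddMonoidHom.mk' (fun x => (∑ i, x.1 i) + x.2) ?_,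
    AddMonoidHom.mk'
      (fun y => (fun i => (∑ s : X6, if i ∈ s.1 then y.1 s else 0) - 2 * y.2, 2 * y.2)) ?_,
    AddMonoidHom.mk' (fun w => (fun s => w ⟦s⟧ - ∑ t, w t, -2 * ∑ t, w t)) ?_,
    ?_, ?_, ?_, ?_⟩
  · intro a b
    simp only [Prod.fst_add, Prod.snd_add, Pi.add_apply, Finset.sum_add_distrib]
    ring
  · intro a b
    refine Prod.ext ?_ ?_ <;>
      simp only [Prod.fst_add, Prod.snd_add, Pi.add_apply]
    · funext i
      have : ∀ s : X6, (if i ∈ s.1 then a.1 s + b.1 s else 0)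
          = (if i ∈ s.1 then a.1 s else 0) + (if i ∈ s.1 then b.1 s else 0) := by
        intro s; split_ifs <;> simp
      simp only [Pi.add_apply, Finset.sum_congr rfl fun s _ => this s,
        Finset.sum_add_distrib]
      ring
    · ring
  · intro a b
    refine Prod.ext ?_ ?_
    · funext s
      simp only [Prod.fst_add, Pi.add_apply, Finset.sum_add_distrib]
      ring
    · simp only [Prod.snd_add, Pi.add_apply, Finset.sum_add_distrib]
      ring
  · intro n
    rw [hd₀]
    simp [Fin.sum_univ_four]
    ring
  · intro x
    obtain ⟨x1, m⟩ := x
    simp only [AddMonoidHom.mk'_apply]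
    rw [hd₁, hd₀]
    refine Prod.ext ?_ ?_
    · funext i
      simp only [Prod.fst_add, Pi.add_apply, Prod.smul_fst, Pi.smul_apply, smul_eq_mul]
      have : ∀ s : X6, (if i ∈ s.1 then ((∑ j ∈ s.1, x1 j) + m) else 0)
          = (if i ∈ s.1 then (∑ j ∈ s.1, x1 j) else 0) + (if i ∈ s.1 then m else 0) := by
        intro s; split_ifs <;> simp
      rw [Finset.sum_congr rfl fun s _ => this s, Finset.sum_add_distrib, key1, key0]
      ring
    · simp only [Prod.snd_add, Prod.smul_snd, smul_eq_mul]
      ring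
  · intro y
    obtain ⟨y1, k⟩ := y
    simp only [AddMonoidHom.mk'_apply]
    rw [hd₁, hd₂]
    refine Prod.ext ?_ ?_
    · funext s
      simp only [Prod.fst_add, Pi.add_apply, Prod.smul_fst, Pi.smul_apply, smul_eq_mul]
      rw [Finset.sum_sub_distrib, Finset.sum_const, key2]
      rw [key3 s y1]
      rw [Finset.sum_sub_distrib (f := fun t : X3 => ∑ u : X6, if (⟦u⟧ : X3) = t then y1 u else 0),
        key4, Finset.sum_const, nsmul_eq_mul, nsmul_eq_mul, cardX3,
        show ((s.1.card : ℤ)) = 2 by exact_mod_cast s.2]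
      ring
    · simp only [Prod.snd_add, Prod.smul_snd, smul_eq_mul]
      rw [Finset.sum_sub_distrib, Finset.sum_const, key5]
      rw [Finset.sum_sub_distrib (f := fun t : X3 => ∑ u : X6, if (⟦u⟧ : X3) = t then y1 u else 0),
        key4, Finset.sum_const, nsmul_eq_mul, nsmul_eq_mul, cardX3]
      simp only [Finset.card_univ, Fintype.card_fin, Nat.cast_ofNat]
      ring
  · intro w
    simp only [AddMonoidHom.mk'_apply]
    rw [hd₂]
    funext t
    induction t using Quotient.inductionOn with
    | h s =>
      simp only [Pi.smul_apply, smul_eq_mul]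
      have step : ∀ u : X6, (if (⟦u⟧ : X3) = ⟦s⟧ then (w ⟦u⟧ - ∑ t, w t) else 0)
          = (if (⟦u⟧ : X3) = ⟦s⟧ then (w ⟦s⟧ - ∑ t, w t) else 0) := by
        intro u; split_ifs with h
        · rw [h]
        · rfl
      rw [Finset.sum_congr rfl fun u _ => step u,
        key3 s (fun _ => w ⟦s⟧ - ∑ t, w t)]
      ring
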